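/- Let m ≥ 1 and t ≥ 0 be integers and let ρ ∈ (0,1). Then Σ_{j=1}^{t+1} (j/(t+1)) · C((m+1)(t+1), t+1−j) · ρ^{t+1−j} (1−ρ)^{m(t+1)+j} = [(1−ρ)^{1+m+mt} · ρ^{t} · (1+m+t+mt)! / ((1+m+mt) · (1+t)! · (m+mt)!)] · Σ_{k=0}^{t} [(2)_k · (−t)_k / ((2+m+mt)_k · k!)] · (1 − 1/ρ)^k, where C denotes the binomial coefficient and (x)_k = x(x+1)⋯(x+k−1) denotes the ascending Pochhammer symbol (with (x)₀ = 1), so that the right-hand inner sum is the terminating hypergeometric series ₂F₁(2, −t; 2+m+mt; 1 − 1/ρ). -/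

import Mathlib

/-- Ascending Pochhammer symbol `(x)_k = x(x+1)⋯(x+k−1)` in the reals. -/
noncomputable def poch (x : ℝ) (k : ℕ) : ℝ := ∏ i ∈ Finset.range k, (x + i)

lemma poch_succ (x : ℝ) (k : ℕ) : poch x (k+1) = poch x k * (x + k) :=
  Finset.prod_range_succ _ _

lemma poch_two (k : ℕ) : poch 2 k = (Nat.factorial (k+1) : ℝ) := by
  induction k with
  | zero => simp [poch]
  | succ k ih => rw [poch_succ, ih]; push_cast [Nat.factorial_succ]; ring

lemma poch_nat (n k : ℕ) : poch ((n:ℝ)+1) k * (Nat.factorial n : ℝ) = (Nat.factorial (n+k) : ℝ) := by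
  induction k with
  | zero => simp [poch]
  | succ k ih =>
      rw [poch_succ, mul_right_comm, ih]
      push_cast [show n + (k+1) = (n+k)+1 by ring, Nat.factorial_succ]
      ring

lemma poch_neg (t k : ℕ) (h : k ≤ t) :
    poch (-(t:ℝ)) k * (Nat.factorial (t-k) : ℝ) = (-1)^k * (Nat.factorial t : ℝ) := by
  induction k with
  | zero => simp [poch]
  | succ k ih =>
      have hk : k ≤ t := Nat.le_of_succ_le h
      have h1 : t - k = (t - (k+1)) + 1 := by omega
      have ih' := ih hk
      rw [h1, Nat.factorial_succ] at ih'
      have h2 : ((t - (k+1) : ℕ) : ℝ) + 1 = (t:ℝ) - k := by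
        have h3 : ((t - (k+1) : ℕ) : ℝ) = (t:ℝ) - ((k:ℝ)+1) := by
          rw [Nat.cast_sub h]; push_cast; ring
        rw [h3]; ring
      rw [poch_succ]
      push_cast at ih' ⊢
      rw [h2] at ih'
      calc poch (-(t:ℝ)) k * (-(t:ℝ) + k) * (Nat.factorial (t-(k+1)) : ℝ)
          = -(poch (-(t:ℝ)) k * (((t:ℝ) - k) * (Nat.factorial (t-(k+1)) : ℝ))) := by ring
        _ = -((-1)^k * (Nat.factorial t : ℝ)) := by rw [← ih']
        _ = (-1)^(k+1) * (Nat.factorial t : ℝ) := by ring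

/-- The probability `P_t(0^{m+1})` expressed through the terminating
hypergeometric series `₂F₁(2, −t; 2+m+mt; 1 − 1/ρ)`. -/
theorem prob_block_eq_hypergeometric (m t : ℕ) (hm : 1 ≤ m) (ρ : ℝ)
    (hρ : ρ ∈ Set.Ioo (0 : ℝ) 1) :
    (∑ j ∈ Finset.Icc 1 (t + 1),
        (j : ℝ) / (t + 1) * (Nat.choose ((m + 1) * (t + 1)) (t + 1 - j) : ℝ) *
          ρ ^ (t + 1 - j) * (1 - ρ) ^ (m * (t + 1) + j))
    = (1 - ρ) ^ (1 + m + m * t) * ρ ^ t *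
        (Nat.factorial (1 + m + t + m * t) : ℝ) /
        (((1 + m + m * t : ℕ) : ℝ) * (Nat.factorial (1 + t) : ℝ) *
          (Nat.factorial (m + m * t) : ℝ)) *
      ∑ k ∈ Finset.range (t + 1),
        poch 2 k * poch (-(t : ℝ)) k /
          (poch (((2 + m + m * t : ℕ) : ℝ)) k * (Nat.factorial k : ℝ)) *
          (1 - 1 / ρ) ^ k := by
  obtain ⟨hρ0, hρ1⟩ := hρ
  have hρne : ρ ≠ 0 := ne_of_gt hρ0
  rw [Finset.mul_sum, ← Finset.Ico_add_one_right_eq_Icc, Finset.sum_Ico_eq_sum_range]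
  simp only [show t + 1 + 1 - 1 = t + 1 from rfl]
  refine Finset.sum_congr rfl fun k hk => ?_
  have hkt : k ≤ t := Nat.lt_succ_iff.mp (Finset.mem_range.mp hk)
  -- rewrite nat index
  have hidx : t + 1 - (1 + k) = t - k := by omega
  rw [hidx]
  -- poch evaluations
  have hcast : ((2 + m + m * t : ℕ) : ℝ) = ((1 + m + m * t : ℕ) : ℝ) + 1 := by
    push_cast; ring
  have hfacne : ∀ n : ℕ, (Nat.factorial n : ℝ) ≠ 0 := fun n =>
    Nat.cast_ne_zero.mpr (Nat.factorial_ne_zero n)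
  have hpc : poch (((2 + m + m * t : ℕ) : ℝ)) k
      = (Nat.factorial (1 + m + m * t + k) : ℝ) / (Nat.factorial (1 + m + m * t) : ℝ) := by
    rw [hcast, eq_div_iff (hfacne _)]
    exact poch_nat (1 + m + m * t) k
  have hpn : poch (-(t : ℝ)) k
      = (-1) ^ k * (Nat.factorial t : ℝ) / (Nat.factorial (t - k) : ℝ) := by
    rw [eq_div_iff (hfacne _)]
    exact poch_neg t k hkt
  have hsign : (1 - 1 / ρ) ^ k = (-1) ^ k * ((1 - ρ) ^ k / ρ ^ k) := by
    have h1 : (1 - 1 / ρ) = (-1) * ((1 - ρ) / ρ) := by field_simp; ring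
    rw [h1, mul_pow, div_pow]
  have hsq : ((-1 : ℝ)) ^ k * (-1) ^ k = 1 := by
    rw [← mul_pow]; norm_num
  -- combine the two sign-carrying factors
  have key : poch (-(t : ℝ)) k * (1 - 1 / ρ) ^ k
      = (Nat.factorial t : ℝ) / (Nat.factorial (t - k) : ℝ) * ((1 - ρ) ^ k / ρ ^ k) := by
    rw [hpn, hsign]
    calc (-1 : ℝ) ^ k * (Nat.factorial t : ℝ) / (Nat.factorial (t - k) : ℝ)
          * ((-1) ^ k * ((1 - ρ) ^ k / ρ ^ k))
        = ((-1 : ℝ) ^ k * (-1) ^ k) *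
            ((Nat.factorial t : ℝ) / (Nat.factorial (t - k) : ℝ) * ((1 - ρ) ^ k / ρ ^ k)) := by
          ring
      _ = _ := by rw [hsq, one_mul]
  -- binomial coefficient in factorial form
  have hle : t - k ≤ (m + 1) * (t + 1) :=
    le_trans (by omega : t - k ≤ t + 1) (Nat.le_mul_of_pos_left _ (by omega))
  have hsub : (m + 1) * (t + 1) - (t - k) = 1 + m + m * t + k := by
    have : (m + 1) * (t + 1) = m * t + m + t + 1 := by ring
    omega
  have hchoose : ((Nat.choose ((m + 1) * (t + 1)) (t - k)) : ℝ)
      = (Nat.factorial (1 + m + t + m * t) : ℝ) /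
          ((Nat.factorial (t - k) : ℝ) * (Nat.factorial (1 + m + m * t + k) : ℝ)) := by
    rw [eq_div_iff (by positivity)]
    have h := Nat.choose_mul_factorial_mul_factorial hle
    rw [hsub] at h
    rw [show (1 + m + t + m * t) = (m + 1) * (t + 1) from by ring, ← mul_assoc]
    exact_mod_cast congrArg (Nat.cast (R := ℝ)) h
  -- power splittings
  have hρpow : ρ ^ t = ρ ^ (t - k) * ρ ^ k := by
    rw [← pow_add]; congr 1; omega
  have hqpow : (1 - ρ) ^ (m * (t + 1) + (1 + k)) = (1 - ρ) ^ (1 + m + m * t) * (1 - ρ) ^ k := by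
    rw [← pow_add]; congr 1; ring
  -- factorial splittings
  have hf1 : (Nat.factorial (1 + t) : ℝ) = ((t : ℝ) + 1) * (Nat.factorial t : ℝ) := by
    rw [show 1 + t = t + 1 from by ring, Nat.factorial_succ]; push_cast; ring
  have hf3 : (Nat.factorial (1 + m + m * t) : ℝ)
      = ((1 + m + m * t : ℕ) : ℝ) * (Nat.factorial (m + m * t) : ℝ) := by
    rw [show 1 + m + m * t = (m + m * t) + 1 from by ring, Nat.factorial_succ]; push_cast; ring
  rw [show (1 - ρ) ^ (1 + m + m * t) * ρ ^ t *
        (Nat.factorial (1 + m + t + m * t) : ℝ) /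
        (((1 + m + m * t : ℕ) : ℝ) * (Nat.factorial (1 + t) : ℝ) *
          (Nat.factorial (m + m * t) : ℝ)) *
      (poch 2 k * poch (-(t : ℝ)) k /
          (poch (((2 + m + m * t : ℕ) : ℝ)) k * (Nat.factorial k : ℝ)) *
          (1 - 1 / ρ) ^ k)
      = (1 - ρ) ^ (1 + m + m * t) * ρ ^ t *
        (Nat.factorial (1 + m + t + m * t) : ℝ) /
        (((1 + m + m * t : ℕ) : ℝ) * (Nat.factorial (1 + t) : ℝ) *
          (Nat.factorial (m + m * t) : ℝ)) *
      (poch 2 k / (poch (((2 + m + m * t : ℕ) : ℝ)) k * (Nat.factorial k : ℝ)) *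
          (poch (-(t : ℝ)) k * (1 - 1 / ρ) ^ k)) from by ring,
    key, poch_two, hpc, hchoose, hρpow, hqpow, hf1, hf3]
  have hne1 : ((1 + m + m * t : ℕ) : ℝ) ≠ 0 := by positivity
  have hne2 : ((t : ℝ) + 1) ≠ 0 := by positivity
  have hfk : (Nat.factorial (k + 1) : ℝ) = ((k : ℝ) + 1) * (Nat.factorial k : ℝ) := by
    rw [Nat.factorial_succ]; push_cast; ring
  rw [hfk]
  push_cast
  field_simp
  ring
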